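/- For all n ≥ 1, Q(n) = ∑_{d|n} μ(d) Q̂(n/d), where μ is the Möbius function. -/

import Mathlib

open ArithmeticFunction in
/-- `Q n`: the number of partitions of `n` into distinct parts. -/
def Q (n : ℕ) : ℕ := (Nat.Partition.distincts n).card

/-- `Qhat n`: the number of partitions of `n` in which every part occurs with
the same multiplicity. -/
def Qhat (n : ℕ) : ℕ :=
  (Finset.univ.filter fun p : Nat.Partition n =>
    ∀ i ∈ p.parts, ∀ j ∈ p.parts, p.parts.count i = p.parts.count j).card

private lemma sum_nsmul_mult (c : ℕ) (s : Multiset ℕ) : (c • s).sum = c * s.sum := by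
  induction c with
  | zero => simp
  | succ k ih => rw [succ_nsmul, Multiset.sum_add, ih, Nat.succ_mul]

private lemma eq_nsmul_dedup {s : Multiset ℕ} {c : ℕ}
    (h : ∀ a ∈ s, s.count a = c) : s = c • s.dedup := by
  ext b
  rw [Multiset.count_nsmul, Multiset.count_dedup]
  by_cases hb : b ∈ s
  · rw [if_pos hb, h b hb, mul_one]
  · rw [if_neg hb, mul_zero, Multiset.count_eq_zero_of_notMem hb]

private lemma Qhat_eq (m : ℕ) (hm : 0 < m) :
    Qhat m = ∑ d ∈ m.divisors, Q (m / d) := by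
  classical
  unfold Qhat
  set S := Finset.univ.filter fun p : Nat.Partition m =>
    ∀ i ∈ p.parts, ∀ j ∈ p.parts, p.parts.count i = p.parts.count j with hS
  -- key structure facts for p ∈ S
  have hstruct : ∀ p ∈ S, p.parts.dedup.sum ∣ m ∧ 0 < p.parts.dedup.sum ∧
      p.parts = (m / p.parts.dedup.sum) • p.parts.dedup := by
    intro p hp
    rw [hS, Finset.mem_filter] at hp
    have hne : p.parts ≠ 0 := by
      intro h0
      have := p.parts_sum
      rw [h0] at this
      simp at this
      omega
    obtain ⟨a, ha⟩ := Multiset.exists_mem_of_ne_zero hne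
    have hcount : ∀ b ∈ p.parts, p.parts.count b = p.parts.count a :=
      fun b hb => hp.2 b hb a ha
    have heq := eq_nsmul_dedup hcount
    have hsum : p.parts.count a * p.parts.dedup.sum = m := by
      have := p.parts_sum
      rw [heq, sum_nsmul_mult] at this
      exact this
    have hd : 0 < p.parts.dedup.sum := by
      rcases Nat.eq_zero_or_pos p.parts.dedup.sum with h | h
      · rw [h, mul_zero] at hsum; omega
      · exact h
    have hcd : m / p.parts.dedup.sum = p.parts.count a :=
      Nat.div_eq_of_eq_mul_left hd hsum.symm
    refine ⟨⟨p.parts.count a, by rw [mul_comm] at hsum; exact hsum.symm⟩, hd, ?_⟩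
    rw [hcd]; exact heq
  rw [Finset.card_eq_sum_card_fiberwise
    (f := fun p : Nat.Partition m => m / p.parts.dedup.sum) (t := m.divisors) ?_]
  · refine Finset.sum_congr rfl fun d hd => ?_
    rw [Nat.mem_divisors] at hd
    have hd0 : 0 < d := Nat.pos_of_dvd_of_pos hd.1 hm
    have hmd0 : 0 < m / d := Nat.div_pos (Nat.le_of_dvd hm hd.1) hd0
    -- bijection between fiber and distincts (m/d)
    rw [Q]
    apply Finset.card_bij
      (i := fun p hp => (⟨p.parts.dedup,
        fun hi => p.parts_pos (Multiset.mem_dedup.mp hi), by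
          have hp' := Finset.mem_filter.mp hp
          obtain ⟨hdvd, hpos, _⟩ := hstruct p hp'.1
          have : m / p.parts.dedup.sum = d := hp'.2
          rw [← this, Nat.div_div_self hdvd (by omega)]⟩ : Nat.Partition (m / d)))
    · -- maps into distincts
      intro p hp
      exact Finset.mem_filter.mpr ⟨Finset.mem_univ _, Multiset.nodup_dedup _⟩
    · -- injective
      intro p1 hp1 p2 hp2 hval
      have h1 := Finset.mem_filter.mp hp1
      have h2 := Finset.mem_filter.mp hp2
      obtain ⟨_, _, he1⟩ := hstruct p1 h1.1
      obtain ⟨_, _, he2⟩ := hstruct p2 h2.1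
      have hded : p1.parts.dedup = p2.parts.dedup := congrArg Nat.Partition.parts hval
      ext1
      rw [he1, he2, hded]
    · -- surjective
      intro q hq
      have hqnodup : q.parts.Nodup := (Finset.mem_filter.mp hq).2
      have hsum : (d • q.parts).sum = m := by
        rw [sum_nsmul_mult, q.parts_sum, Nat.mul_div_cancel' hd.1]
      have hded : (d • q.parts).dedup = q.parts := by
        ext b
        rw [Multiset.count_dedup]
        by_cases hb : b ∈ q.parts
        · rw [if_pos ((Multiset.mem_nsmul_of_ne_zero (by omega : d ≠ 0)).mpr hb),
            Multiset.count_eq_one_of_mem hqnodup hb]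
        · rw [if_neg (fun h => hb (Multiset.mem_of_mem_nsmul h)),
            Multiset.count_eq_zero_of_notMem hb]
      refine ⟨⟨d • q.parts, fun hi => q.parts_pos (Multiset.mem_of_mem_nsmul hi), hsum⟩,
        ?_, ?_⟩
      · refine Finset.mem_filter.mpr ⟨Finset.mem_filter.mpr ⟨Finset.mem_univ _, ?_⟩, ?_⟩
        · intro i hi j hj
          show Multiset.count i (d • q.parts) = Multiset.count j (d • q.parts)
          rw [Multiset.count_nsmul, Multiset.count_nsmul,
            Multiset.count_eq_one_of_mem hqnodup (Multiset.mem_of_mem_nsmul hi),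
            Multiset.count_eq_one_of_mem hqnodup (Multiset.mem_of_mem_nsmul hj)]
        · show m / ((d • q.parts).dedup).sum = d
          rw [hded, q.parts_sum, Nat.div_div_self hd.1 (by omega)]
      · ext1
        show (d • q.parts).dedup = q.parts
        exact hded
  · intro p hp
    obtain ⟨hdvd, hpos, _⟩ := hstruct p hp
    exact Nat.mem_divisors.mpr ⟨Nat.div_dvd_of_dvd hdvd, by omega⟩

open ArithmeticFunction ArithmeticFunction.Moebius in
theorem Q_eq_moebius_inversion (n : ℕ) (hn : 1 ≤ n) :
    (Q n : ℤ) = ∑ d ∈ n.divisors, μ d * Qhat (n / d) := by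
  have key : ∀ m > 0, ∑ i ∈ m.divisors, (Q i : ℤ) = (Qhat m : ℤ) := by
    intro m hm
    rw [Qhat_eq m hm, Nat.cast_sum, ← Nat.sum_div_divisors m (fun i => (Q i : ℤ))]
  have := (ArithmeticFunction.sum_eq_iff_sum_mul_moebius_eq
    (f := fun i => (Q i : ℤ)) (g := fun i => (Qhat i : ℤ))).mp key n (by omega)
  rw [← this, ← Nat.sum_divisorsAntidiagonal (fun d e => (μ d : ℤ) * (Qhat e : ℤ))]
  simp [Int.cast_id]
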